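/- Let F(x,y) = (x−1)(x+1)f₃(x,y)f₄(x,y) with f₃, f₄ affine, and let ε ∈ ℂ. On U = {(x,y) ∈ ℂ² : x ≠ ±1} define φ̃(x,y) = F(x,y)/(x−1) + F(x,y)²/(x+1), ψ₁(x,y) = 1/(x−1) + 2F(x,y)/(x+1), ψ₂(x,y) = 2/(x+1), and the 1-forms η₀ = dF + εφ̃ dx, η₁ = εψ₁ dx, η₂ = εψ₂ dx, η₃ = 0. Then the Godbillon–Vey equations hold on U: dη₀ = η₀∧η₁, dη₁ = η₀∧η₂, dη₂ = η₀∧η₃ + η₁∧η₂ (= 0); explicitly, ∂_yφ̃ = ψ₁·∂_yF, ∂_yψ₁ = ψ₂·∂_yF, and ∂_yψ₂ = 0 on U. Moreover ω = F·df₁/f₁ + F²·df₂/f₂ (f₁ = x−1, f₂ = x+1) is a polynomial 1-form, and ∂_yF(x,y) = 0 whenever x = 1 or x = −1, so the deformation dF + εω = 0 preserves the pair of parallel lines x = ±1 and admits a Godbillon–Vey sequence of length 3, i.e., it has a first integral of Riccati type. -/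

import Mathlib

/-- Let `F(x,y) = (x−1)(x+1)f₃(x,y)f₄(x,y)` with `f₃, f₄` affine, and `ε ∈ ℂ`.  On
`U = {(x,y) : x ≠ ±1}` set `φ̃ = F/(x−1) + F²/(x+1)`, `ψ₁ = 1/(x−1) + 2F/(x+1)`,
`ψ₂ = 2/(x+1)`, and `η₀ = dF + εφ̃ dx`, `η₁ = εψ₁ dx`, `η₂ = εψ₂ dx`, `η₃ = 0`.  The
Godbillon–Vey equations `dη₀ = η₀∧η₁`, `dη₁ = η₀∧η₂`, `dη₂ = η₀∧η₃ + η₁∧η₂ (= 0)` hold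
on `U`; explicitly `∂_yφ̃ = ψ₁·∂_yF`, `∂_yψ₁ = ψ₂·∂_yF`, `∂_yψ₂ = 0` on `U`.  Moreover
`ω = F·df₁/f₁ + F²·df₂/f₂` (with `f₁ = x−1`, `f₂ = x+1`) is a polynomial 1-form, and
`∂_yF = 0` on the lines `x = 1` and `x = −1`, so the deformation `dF + εω = 0` preserves
the pair of parallel lines `x = ±1` and admits a Godbillon–Vey sequence of length 3,
i.e. it has a first integral of Riccati type. -/
theorem stmt_10 (a₃ b₃ c₃ a₄ b₄ c₄ : ℂ)
    (h₃ : (a₃, b₃) ≠ (0, 0)) (h₄ : (a₄, b₄) ≠ (0, 0)) (ε : ℂ)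
    (F : ℂ → ℂ → ℂ)
    (hF : ∀ x y, F x y = (x - 1) * (x + 1) * (a₃ * x + b₃ * y + c₃) * (a₄ * x + b₄ * y + c₄)) :
    (∀ x y : ℂ, x ≠ 1 → x ≠ -1 →
      (deriv (fun t => F x t / (x - 1) + (F x t) ^ 2 / (x + 1)) y
        = (1 / (x - 1) + 2 * F x y / (x + 1)) * deriv (fun t => F x t) y)
      ∧ (deriv (fun t => 1 / (x - 1) + 2 * F x t / (x + 1)) y
        = (2 / (x + 1)) * deriv (fun t => F x t) y)
      ∧ deriv (fun _ : ℂ => 2 / (x + 1)) y = 0)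
    ∧ (∃ Q : MvPolynomial (Fin 2) ℂ, ∀ x y : ℂ, x ≠ 1 → x ≠ -1 →
        MvPolynomial.eval ![x, y] Q = F x y / (x - 1) + (F x y) ^ 2 / (x + 1))
    ∧ (∀ y : ℂ, deriv (fun t => F 1 t) y = 0 ∧ deriv (fun t => F (-1) t) y = 0) := by
  have hFfun : ∀ x : ℂ, (fun t => F x t)
      = fun t => (x - 1) * (x + 1) * (a₃ * x + b₃ * t + c₃) * (a₄ * x + b₄ * t + c₄) :=
    fun x => funext (hF x)
  have hdiff : ∀ x y : ℂ, DifferentiableAt ℂ (fun t => F x t) y := by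
    intro x y
    rw [hFfun x]
    fun_prop
  refine ⟨?_, ?_, ?_⟩
  · intro x y hx1 hx2
    have hx1' : x - 1 ≠ 0 := sub_ne_zero.mpr hx1
    have hx2' : x + 1 ≠ 0 := fun h => hx2 (by linear_combination h)
    have hf : HasDerivAt (fun t => F x t) (deriv (fun t => F x t) y) y :=
      (hdiff x y).hasDerivAt
    set D := deriv (fun t => F x t) y with hD
    refine ⟨?_, ?_, ?_⟩
    · have h1 : HasDerivAt (fun t => F x t / (x - 1) + (F x t) ^ 2 / (x + 1))
          (D / (x - 1) + ((2 : ℕ) * F x y ^ (2 - 1) * D) / (x + 1)) y :=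
        (hf.div_const _).add ((hf.pow 2).div_const _)
      rw [h1.deriv]
      field_simp
      ring
    · have h2 : HasDerivAt (fun t => 1 / (x - 1) + 2 * F x t / (x + 1))
          (0 + (2 * D) / (x + 1)) y :=
        (hasDerivAt_const y (1 / (x - 1))).add ((hf.const_mul 2).div_const _)
      rw [h2.deriv]
      field_simp
      ring
    · exact deriv_const y _
  · refine ⟨(MvPolynomial.X 0 + 1) * (MvPolynomial.C a₃ * MvPolynomial.X 0
        + MvPolynomial.C b₃ * MvPolynomial.X 1 + MvPolynomial.C c₃)
        * (MvPolynomial.C a₄ * MvPolynomial.X 0 + MvPolynomial.C b₄ * MvPolynomial.X 1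
          + MvPolynomial.C c₄)
      + (MvPolynomial.X 0 - 1) ^ 2 * (MvPolynomial.X 0 + 1)
        * (MvPolynomial.C a₃ * MvPolynomial.X 0 + MvPolynomial.C b₃ * MvPolynomial.X 1
          + MvPolynomial.C c₃) ^ 2
        * (MvPolynomial.C a₄ * MvPolynomial.X 0 + MvPolynomial.C b₄ * MvPolynomial.X 1
          + MvPolynomial.C c₄) ^ 2, ?_⟩
    intro x y hx1 hx2
    have hx1' : x - 1 ≠ 0 := sub_ne_zero.mpr hx1
    have hx2' : x + 1 ≠ 0 := fun h => hx2 (by linear_combination h)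
    rw [hF]
    simp only [map_add, map_mul, map_sub, map_pow, map_one, MvPolynomial.eval_C,
      MvPolynomial.eval_X, Matrix.cons_val_zero, Matrix.cons_val_one, Matrix.head_cons]
    field_simp
  · intro y
    constructor
    · have : (fun t => F 1 t) = fun _ => (0 : ℂ) := by
        funext t; rw [hF]; ring
      rw [this, deriv_const]
    · have : (fun t => F (-1) t) = fun _ => (0 : ℂ) := by
        funext t; rw [hF]; ring
      rw [this, deriv_const]
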